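/- Let (V, r, parent) be an arborescence, with at least one non-root vertex, with edge weights c, w : V → ℝ such that c v > 0 and w v > 0 for all v ≠ r, satisfying both the combined triangle inequality and the combined 2-optimality condition. Let m be the number of non-root vertices, set c(A) = Σ_{v ≠ r} c(v), w(A) = Σ_{v ≠ r} w(v), and k = c(A) / w(A), and suppose k ≥ 18. Then (m : ℝ) ≥ (k/6)^(k/6) (real power). -/

import Mathlib

/-- `(r, parent)` is an arborescence on `V`: the root is a fixed point of
`parent`, and every vertex reaches the root by iterating `parent`. -/
def IsArborescence {V : Type} (r : V) (parent : V → V) : Prop :=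
  parent r = r ∧ ∀ v : V, ∃ n : ℕ, parent^[n] v = r

open Classical in
/-- The children of a vertex `y`. -/
noncomputable def children {V : Type} [Fintype V] (parent : V → V) (y : V) : Finset V :=
  Finset.univ.filter fun u => parent u = y ∧ u ≠ y

open Classical in
/-- The descendants of a vertex `v` (including `v` itself): the vertex set of the
sub-arborescence below the edge entering `v`. -/
noncomputable def desc {V : Type} [Fintype V] (parent : V → V) (v : V) : Finset V :=
  Finset.univ.filter fun u => ∃ n : ℕ, parent^[n] u = v

open Classical in
/-- The non-root vertices, corresponding to the edges of the arborescence. -/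
noncomputable def nonRoot {V : Type} [Fintype V] (r : V) : Finset V :=
  Finset.univ.filter fun v => v ≠ r

/-- The combined triangle inequality. -/
def CombinedTriangle {V : Type} [Fintype V] (r : V) (parent : V → V) (c w : V → ℝ) : Prop :=
  ∀ v : V, v ≠ r → c v ≤ w v + ∑ u ∈ children parent v, c u

open Classical in
/-- The combined 2-optimality condition. -/
noncomputable def CombinedTwoOpt {V : Type} [Fintype V] (r : V) (parent : V → V) (c w : V → ℝ) : Prop :=
  ∀ v : V, v ≠ r → ∀ z ∈ children parent v,
    c v + c z ≤ w v + ∑ u ∈ (children parent v).erase z, c u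

namespace ArbAux

/-- size of the subtree below (and including) `v` -/
noncomputable def msize {V : Type} [Fintype V] (parent : V → V) (v : V) : ℕ :=
  (desc parent v).card

open Classical in
/-- distance to the root -/
noncomputable def pdist {V : Type} (r : V) (parent : V → V) (v : V) : ℕ :=
  if h : ∃ n : ℕ, parent^[n] v = r then Nat.find h else 0

open Classical in
/-- fuel-based top-down dual value -/
noncomputable def go {V : Type} [Fintype V] (r : V) (parent : V → V) : ℕ → V → ℝ
  | 0, _ => 1
  | (n+1), v =>
    if parent v = r then 1 else
      max 1 (1 + go r parent n (parent v) *
        (1 - 2 * (msize parent v : ℝ) / ((msize parent (parent v) : ℝ) - 1)))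

noncomputable def aval {V : Type} [Fintype V] (r : V) (parent : V → V) (v : V) : ℝ :=
  go r parent (pdist r parent v) v

lemma go_ge_one {V : Type} [Fintype V] (r : V) (parent : V → V) :
    ∀ (n : ℕ) (v : V), 1 ≤ go r parent n v := by
  intro n
  induction n with
  | zero => intro v; simp [go]
  | succ n ih =>
      intro v
      rw [go]
      split
      · exact le_refl 1
      · exact le_max_left _ _

lemma aval_ge_one {V : Type} [Fintype V] (r : V) (parent : V → V) (v : V) :
    1 ≤ aval r parent v := go_ge_one r parent _ v

/-- the potential function -/
noncomputable def psi (x : ℝ) : ℝ := x * Real.log (4 * x) - x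

lemma psi_diff {a b : ℝ} (ha : 0 < a) (hb : 0 < b) :
    psi b - psi a = a * Real.log (b / a) + (b - a) * (Real.log (4 * b) - 1) := by
  unfold psi
  rw [Real.log_div (ne_of_gt hb) (ne_of_gt ha),
      Real.log_mul (by norm_num : (4:ℝ) ≠ 0) (ne_of_gt hb),
      Real.log_mul (by norm_num : (4:ℝ) ≠ 0) (ne_of_gt ha)]
  ring

lemma psi_mono {a b : ℝ} (ha : 1 ≤ a) (hab : a ≤ b) : psi a ≤ psi b := by
  have ha0 : 0 < a := by linarith
  have hb0 : 0 < b := by linarith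
  have h1 : 0 ≤ Real.log (b / a) := Real.log_nonneg ((one_le_div ha0).2 hab)
  have h2 : 1 ≤ Real.log (4 * b) := by
    have he : Real.exp 1 ≤ 4 * b := by
      have := Real.exp_one_lt_d9; nlinarith
    calc (1:ℝ) = Real.log (Real.exp 1) := (Real.log_exp 1).symm
      _ ≤ Real.log (4 * b) := Real.log_le_log (Real.exp_pos 1) he
  nlinarith [psi_diff ha0 hb0]

lemma psi_one : psi 1 = Real.log 4 - 1 := by
  unfold psi; norm_num

/-- The key step inequality for the potential. -/
lemma phi_step {A x y : ℝ} (hA : 1 ≤ A) (hx : 1 ≤ x) (hxy : x ≤ y)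
    (hval : 1 < 1 + A * (1 - 2 * x / y)) :
    psi (1 + A * (1 - 2 * x / y)) ≤ psi A + Real.log (y / x) := by
  have hx0 : 0 < x := by linarith
  have hy0 : 0 < y := lt_of_lt_of_le hx0 hxy
  have hA0 : 0 < A := by linarith
  obtain ⟨val, hdefval⟩ : ∃ val : ℝ, val = 1 + A * (1 - 2 * x / y) := ⟨_, rfl⟩
  rw [← hdefval] at hval ⊢
  have hpos : 0 < 1 - 2 * x / y := by
    by_contra h
    push_neg at h
    have h2 : A * (1 - 2 * x / y) ≤ 0 := mul_nonpos_of_nonneg_of_nonpos (le_of_lt hA0) h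
    rw [hdefval] at hval; linarith
  have hyx1 : (1:ℝ) ≤ y / x := (one_le_div hx0).2 hxy
  have hlogyx : 0 ≤ Real.log (y / x) := Real.log_nonneg hyx1
  by_cases hcase : val ≤ A
  · have := psi_mono (le_of_lt hval) hcase
    linarith
  · push_neg at hcase
    have hval0 : (0:ℝ) < val := by linarith
    have hfrac0 : 0 < 2 * A * x / y := by positivity
    have hg : val - A = 1 - 2 * A * x / y := by rw [hdefval]; ring
    have hg0 : 0 < 1 - 2 * A * x / y := by rw [← hg]; linarith
    have hg1 : val - A < 1 := by rw [hg]; linarith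
    have hval_le : val ≤ 2 * A := by nlinarith
    -- psi val - psi A ≤ (val - A) * log (4 val)
    have hlogvA : Real.log (val / A) ≤ val / A - 1 :=
      Real.log_le_sub_one_of_pos (by positivity)
    have hdiff : psi val - psi A ≤ (val - A) * Real.log (4 * val) := by
      have hid := psi_diff hA0 hval0
      have h3 : A * Real.log (val / A) ≤ val - A := by
        have := mul_le_mul_of_nonneg_left hlogvA (le_of_lt hA0)
        calc A * Real.log (val / A) ≤ A * (val / A - 1) := this
          _ = val - A := by field_simp
      have hexp : (val - A) * (Real.log (4 * val) - 1)
          = (val - A) * Real.log (4 * val) - (val - A) := by ring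
      linarith
    have hlog48 : Real.log (4 * val) ≤ Real.log (8 * A) :=
      Real.log_le_log (by positivity) (by linarith)
    -- main bound: (val - A) * log(8A) ≤ log(y/x)
    set u := 2 * A * x / y with hudef
    have hu0 : 0 < u := hfrac0
    have hu1 : u < 1 := by rw [hudef] at hg0 ⊢; linarith
    have hyx : y / x = 2 * A / u := by
      rw [hudef]; field_simp
    have hL : Real.log 8 ≤ Real.log (8 * A) :=
      Real.log_le_log (by norm_num) (by nlinarith)
    have hL8 : (2:ℝ) ≤ Real.log 8 := by
      have h8 : Real.exp 2 ≤ 8 := by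
        have h1 := Real.exp_one_lt_d9
        have : Real.exp 2 = Real.exp 1 * Real.exp 1 := by
          rw [← Real.exp_add]; norm_num
        nlinarith [Real.exp_pos 1]
      calc (2:ℝ) = Real.log (Real.exp 2) := (Real.log_exp 2).symm
        _ ≤ Real.log 8 := Real.log_le_log (Real.exp_pos 2) h8
    have hL0 : 0 < Real.log (8 * A) := by linarith
    -- log u ≤ u * L - 1 - log L, with L := log (8A)
    have hkey : Real.log u + Real.log (Real.log (8 * A)) ≤ u * Real.log (8 * A) - 1 := by
      have := Real.log_le_sub_one_of_pos (mul_pos hu0 hL0)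
      rwa [Real.log_mul (ne_of_gt hu0) (ne_of_gt hL0)] at this
    -- log 4 ≤ 1 + log (log (8A))
    have hlog4 : Real.log 4 ≤ 1 + Real.log (Real.log (8 * A)) := by
      have h4e : (4:ℝ) / Real.exp 1 ≤ Real.log (8 * A) := by
        have h1 := Real.exp_one_gt_d9
        have : (4:ℝ) / Real.exp 1 ≤ 2 := by
          rw [div_le_iff₀ (Real.exp_pos 1)]; nlinarith
        linarith
      have : Real.log (4 / Real.exp 1) ≤ Real.log (Real.log (8 * A)) :=
        Real.log_le_log (by positivity) h4e
      rw [Real.log_div (by norm_num) (ne_of_gt (Real.exp_pos 1)), Real.log_exp] at this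
      linarith
    -- conclude: (val - A) * log(8A) ≤ log (y/x)
    have hfin : (val - A) * Real.log (8 * A) ≤ Real.log (y / x) := by
      rw [hyx, Real.log_div (by positivity) (ne_of_gt hu0),
          Real.log_mul (by norm_num : (2:ℝ) ≠ 0) (ne_of_gt hA0)]
      have hgu : val - A = 1 - u := by rw [hg, hudef]
      rw [hgu]
      -- need : (1-u) * L ≤ log 2 + log A - log u
      -- from hkey : log u ≤ u L - 1 - log L ≤ u L - log 4
      -- L = log 8 + log A = 3 log 2 + log A ≥ ...
      have hLsplit : Real.log (8 * A) = Real.log 8 + Real.log A := by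
        rw [Real.log_mul (by norm_num) (ne_of_gt hA0)]
      have hlog8 : Real.log 8 = 3 * Real.log 2 := by
        have : (8:ℝ) = 2 ^ (3:ℕ) := by norm_num
        rw [this, Real.log_pow]; push_cast; ring
      have hlog42 : Real.log 4 = 2 * Real.log 2 := by
        have : (4:ℝ) = 2 ^ (2:ℕ) := by norm_num
        rw [this, Real.log_pow]; push_cast; ring
      have hAlog : 0 ≤ Real.log A := Real.log_nonneg hA
      have h5 : Real.log u ≤ u * Real.log (8 * A) - Real.log 4 := by linarith
      have h6 : (1 - u) * Real.log (8 * A)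
          = Real.log (8 * A) - u * Real.log (8 * A) := by ring
      linarith
    calc psi val ≤ psi A + (val - A) * Real.log (4 * val) := by linarith
      _ ≤ psi A + (val - A) * Real.log (8 * A) := by
          have hvA0 : (0:ℝ) ≤ val - A := by linarith
          have := mul_le_mul_of_nonneg_left hlog48 hvA0
          linarith
      _ ≤ psi A + Real.log (y / x) := by linarith


section Tree

open Classical

set_option linter.unusedSectionVars false

variable {V : Type} [Fintype V] (r : V) (parent : V → V)

lemma pdist_spec (harb : IsArborescence r parent) (v : V) :
    parent^[pdist r parent v] v = r := by
  unfold pdist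
  rw [dif_pos (harb.2 v)]
  exact Nat.find_spec (harb.2 v)

lemma pdist_min (harb : IsArborescence r parent) {v : V} {n : ℕ}
    (h : parent^[n] v = r) : pdist r parent v ≤ n := by
  unfold pdist
  rw [dif_pos (harb.2 v)]
  exact Nat.find_le h

lemma iterate_root (harb : IsArborescence r parent) (n : ℕ) :
    parent^[n] r = r := Function.iterate_fixed harb.1 n

lemma pdist_ne_zero (harb : IsArborescence r parent) {v : V} (hv : v ≠ r) :
    pdist r parent v ≠ 0 := by
  intro h0
  have := pdist_spec r parent harb v
  rw [h0] at this
  exact hv this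

lemma fix_eq_root (harb : IsArborescence r parent) {z : V} (hz : parent z = z) :
    z = r := by
  have h1 := pdist_spec r parent harb z
  rw [Function.iterate_fixed hz] at h1
  exact h1

lemma dist_eq (harb : IsArborescence r parent) {u v : V} {n : ℕ}
    (h : parent^[n] u = v) (hv : v ≠ r) :
    n + pdist r parent v = pdist r parent u := by
  have h1 : pdist r parent u ≤ pdist r parent v + n := by
    apply pdist_min r parent harb
    rw [Function.iterate_add_apply, h]
    exact pdist_spec r parent harb v
  have h2 : n < pdist r parent u := by
    by_contra hcon
    push_neg at hcon
    apply hv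
    have hthis : parent^[(n - pdist r parent u) + pdist r parent u] u = v := by
      rw [Nat.sub_add_cancel hcon]; exact h
    rw [Function.iterate_add_apply, pdist_spec r parent harb u] at hthis
    rw [← hthis]
    exact iterate_root r parent harb _
  have h3 : pdist r parent v ≤ pdist r parent u - n := by
    apply pdist_min r parent harb
    have : parent^[(pdist r parent u - n) + n] u = r := by
      rw [Nat.sub_add_cancel (le_of_lt h2)]
      exact pdist_spec r parent harb u
    rw [Function.iterate_add_apply, h] at this
    exact this
  omega

lemma pdist_parent (harb : IsArborescence r parent) {v : V} (hv : v ≠ r) :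
    pdist r parent (parent v) + 1 = pdist r parent v := by
  by_cases hp : parent v = r
  · have h1 : pdist r parent (parent v) = 0 := by
      rw [hp]
      exact Nat.le_zero.1 (pdist_min r parent harb (by simp))
    have h2 : pdist r parent v ≤ 1 := pdist_min r parent harb (by simpa using hp)
    have h3 := pdist_ne_zero r parent harb hv
    omega
  · have := dist_eq r parent harb (show parent^[1] v = parent v by simp) hp
    omega

lemma mem_desc (u v : V) : u ∈ desc parent v ↔ ∃ n : ℕ, parent^[n] u = v := by
  unfold desc
  simp

lemma self_mem_desc (v : V) : v ∈ desc parent v := (mem_desc parent v v).2 ⟨0, rfl⟩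

lemma desc_ne_root (harb : IsArborescence r parent) {u v : V} (hv : v ≠ r)
    (hu : u ∈ desc parent v) : u ≠ r := by
  obtain ⟨n, hn⟩ := (mem_desc parent _ _).1 hu
  intro h
  rw [h, iterate_root r parent harb n] at hn
  exact hv hn.symm

lemma desc_subset_nonRoot (harb : IsArborescence r parent) {v : V} (hv : v ≠ r) :
    desc parent v ⊆ nonRoot r := by
  intro u hu
  unfold nonRoot
  simp [desc_ne_root r parent harb hv hu]

lemma mem_children (z v : V) : z ∈ children parent v ↔ parent z = v ∧ z ≠ v := by
  unfold children
  simp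

lemma children_ne_root (harb : IsArborescence r parent) {z v : V} (hv : v ≠ r)
    (hz : z ∈ children parent v) : z ≠ r := by
  intro h
  subst h
  exact hv ((((mem_children parent _ _).1 hz).1.symm.trans harb.1).symm).symm

lemma desc_decomp (harb : IsArborescence r parent) {v : V} (hv : v ≠ r) :
    desc parent v = insert v ((children parent v).biUnion (desc parent)) := by
  ext u
  constructor
  · intro hu
    obtain ⟨n, hn⟩ := (mem_desc parent _ _).1 hu
    by_cases huv : u = v
    · subst huv; exact Finset.mem_insert_self _ _
    · apply Finset.mem_insert_of_mem
      obtain ⟨n', rfl⟩ : ∃ n', n = n' + 1 := by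
        cases n with
        | zero => exact absurd hn huv
        | succ m => exact ⟨m, rfl⟩
      rw [Finset.mem_biUnion]
      refine ⟨parent^[n'] u, ?_, (mem_desc parent _ _).2 ⟨n', rfl⟩⟩
      rw [mem_children parent]
      constructor
      · rw [← Function.iterate_succ_apply' parent n' u]
        exact hn
      · intro heq
        apply hv
        apply fix_eq_root r parent harb
        calc parent v = parent (parent^[n'] u) := by rw [heq]
          _ = v := by rw [← Function.iterate_succ_apply' parent n' u]; exact hn
  · intro hu
    rcases Finset.mem_insert.1 hu with h | h
    · subst h; exact self_mem_desc parent u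
    · obtain ⟨z, hz, hdz⟩ := Finset.mem_biUnion.1 h
      obtain ⟨n', hn'⟩ := (mem_desc parent _ _).1 hdz
      apply (mem_desc parent _ _).2
      refine ⟨n' + 1, ?_⟩
      rw [Function.iterate_succ_apply', hn', ((mem_children parent _ _).1 hz).1]


lemma not_mem_biUnion (harb : IsArborescence r parent) {v : V} (hv : v ≠ r) :
    v ∉ (children parent v).biUnion (desc parent) := by
  intro hmem
  obtain ⟨z, hz, hvz⟩ := Finset.mem_biUnion.1 hmem
  obtain ⟨n, hn⟩ := (mem_desc parent _ _).1 hvz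
  have hcyc : parent^[n + 1] v = v := by
    rw [Function.iterate_succ_apply', hn, ((mem_children parent _ _).1 hz).1]
  have := dist_eq r parent harb hcyc hv
  omega

lemma children_dist (harb : IsArborescence r parent) {v z : V} (hv : v ≠ r)
    (hz : z ∈ children parent v) :
    pdist r parent z = pdist r parent v + 1 := by
  have hzr := children_ne_root r parent harb hv hz
  have := pdist_parent r parent harb hzr
  rw [((mem_children parent _ _).1 hz).1] at this
  omega

lemma desc_disj (harb : IsArborescence r parent) {v : V} (hv : v ≠ r) :
    ∀ z₁ ∈ children parent v, ∀ z₂ ∈ children parent v, z₁ ≠ z₂ →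
      Disjoint (desc parent z₁) (desc parent z₂) := by
  intro z₁ hz₁ z₂ hz₂ hne
  rw [Finset.disjoint_left]
  intro u hu₁ hu₂
  obtain ⟨n₁, hn₁⟩ := (mem_desc parent _ _).1 hu₁
  obtain ⟨n₂, hn₂⟩ := (mem_desc parent _ _).1 hu₂
  have hz1r := children_ne_root r parent harb hv hz₁
  have hz2r := children_ne_root r parent harb hv hz₂
  have e₁ := dist_eq r parent harb hn₁ hz1r
  have e₂ := dist_eq r parent harb hn₂ hz2r
  have d₁ := children_dist r parent harb hv hz₁
  have d₂ := children_dist r parent harb hv hz₂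
  have : n₁ = n₂ := by omega
  apply hne
  rw [← hn₁, ← hn₂, this]

lemma msize_card (harb : IsArborescence r parent) {v : V} (hv : v ≠ r) :
    msize parent v = 1 + ∑ z ∈ children parent v, msize parent z := by
  unfold msize
  rw [desc_decomp r parent harb hv,
      Finset.card_insert_of_notMem (not_mem_biUnion r parent harb hv),
      Finset.card_biUnion (desc_disj r parent harb hv)]
  ring

lemma msize_pos (v : V) : 1 ≤ msize parent v :=
  Finset.card_pos.2 ⟨v, self_mem_desc parent v⟩

lemma msize_le (harb : IsArborescence r parent) {v : V} (hv : v ≠ r) :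
    msize parent v ≤ (nonRoot r).card :=
  Finset.card_le_card (desc_subset_nonRoot r parent harb hv)

lemma msize_child (harb : IsArborescence r parent) {v z : V} (hv : v ≠ r)
    (hz : z ∈ children parent v) :
    msize parent z + 1 ≤ msize parent v := by
  rw [msize_card r parent harb hv]
  have : msize parent z ≤ ∑ u ∈ children parent v, msize parent u :=
    Finset.single_le_sum (fun u _ => Nat.zero_le _) hz
  omega

lemma sum_msize_children (harb : IsArborescence r parent) {v : V} (hv : v ≠ r) :
    ∑ z ∈ children parent v, ((msize parent z : ℝ)) = (msize parent v : ℝ) - 1 := by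
  have := msize_card r parent harb hv
  have h2 : (msize parent v : ℝ) = 1 + ∑ z ∈ children parent v, (msize parent z : ℝ) := by
    rw [this]; push_cast; ring
  linarith

lemma aval_root_child (harb : IsArborescence r parent) {v : V} (hv : v ≠ r)
    (hp : parent v = r) : aval r parent v = 1 := by
  obtain ⟨n, hn⟩ : ∃ n, pdist r parent v = n + 1 :=
    ⟨pdist r parent v - 1, (Nat.succ_pred_eq_of_ne_zero (pdist_ne_zero r parent harb hv)).symm⟩
  unfold aval
  rw [hn]
  rw [go]
  rw [if_pos hp]

lemma aval_step (harb : IsArborescence r parent) {v : V} (hv : v ≠ r)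
    (hp : parent v ≠ r) :
    aval r parent v = max 1 (1 + aval r parent (parent v) *
      (1 - 2 * (msize parent v : ℝ) / ((msize parent (parent v) : ℝ) - 1))) := by
  obtain ⟨n, hn⟩ : ∃ n, pdist r parent v = n + 1 :=
    ⟨pdist r parent v - 1, (Nat.succ_pred_eq_of_ne_zero (pdist_ne_zero r parent harb hv)).symm⟩
  have hnp : pdist r parent (parent v) = n := by
    have := pdist_parent r parent harb hv
    omega
  unfold aval
  rw [hn, go, if_neg hp, hnp]

/-- The main invariant: `ψ(a(v)) ≤ ψ(1) + log(m / m_v)`. -/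
lemma aval_inv (harb : IsArborescence r parent) :
    ∀ (n : ℕ) (v : V), v ≠ r → pdist r parent v ≤ n →
      psi (aval r parent v) ≤ psi 1 +
        Real.log (((nonRoot r).card : ℝ) / (msize parent v : ℝ)) := by
  intro n
  induction n with
  | zero =>
      intro v hv hd
      exact absurd (Nat.le_zero.1 hd) (pdist_ne_zero r parent harb hv)
  | succ n ih =>
      intro v hv hd
      have hm1 : (1:ℝ) ≤ (msize parent v : ℝ) := by exact_mod_cast msize_pos parent v
      have hmle : (msize parent v : ℝ) ≤ ((nonRoot r).card : ℝ) := by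
        exact_mod_cast msize_le r parent harb hv
      have hmpos : (0:ℝ) < (msize parent v : ℝ) := by linarith
      have hlog0 : 0 ≤ Real.log (((nonRoot r).card : ℝ) / (msize parent v : ℝ)) :=
        Real.log_nonneg ((one_le_div hmpos).2 hmle)
      by_cases hp : parent v = r
      · rw [aval_root_child r parent harb hv hp]
        linarith
      · -- v is a child of p := parent v
        have hvp : v ∈ children parent (parent v) := by
          rw [mem_children parent]
          exact ⟨rfl, fun h => hv (fix_eq_root r parent harb (by rw [← h]))⟩
        have hppos : (1:ℝ) ≤ (msize parent (parent v) : ℝ) := by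
          exact_mod_cast msize_pos parent (parent v)
        have hchild : (msize parent v : ℝ) + 1 ≤ (msize parent (parent v) : ℝ) := by
          exact_mod_cast msize_child r parent harb hp hvp
        have hdp : pdist r parent (parent v) ≤ n := by
          have := pdist_parent r parent harb hv
          omega
        have hih := ih (parent v) hp hdp
        have hA := aval_ge_one r parent (parent v)
        rw [aval_step r parent harb hv hp]
        set A := aval r parent (parent v) with hAdef
        set X := (msize parent v : ℝ) with hX
        set Y := (msize parent (parent v) : ℝ) - 1 with hY
        have hXY : X ≤ Y := by rw [hY]; linarith
        have hYpos : (0:ℝ) < Y := by linarith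
        by_cases hval : 1 + A * (1 - 2 * X / Y) ≤ 1
        · rw [max_eq_left hval]
          linarith
        · push_neg at hval
          rw [max_eq_right (le_of_lt hval)]
          have hstep := phi_step hA hm1 hXY hval
          have hmp : (msize parent (parent v) : ℝ) ≤ ((nonRoot r).card : ℝ) := by
            exact_mod_cast msize_le r parent harb hp
          have hcard1 : (1:ℝ) ≤ ((nonRoot r).card : ℝ) := le_trans hm1 hmle
          -- combine : log(m/m_p) + log(Y/X) ≤ log(m/X)
          have hcomb : Real.log (((nonRoot r).card : ℝ) / (msize parent (parent v) : ℝ))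
              + Real.log (Y / X)
              ≤ Real.log (((nonRoot r).card : ℝ) / X) := by
            rw [← Real.log_mul (by positivity) (by positivity)]
            apply Real.log_le_log (by positivity)
            have hYle : Y ≤ (msize parent (parent v) : ℝ) := by rw [hY]; linarith
            rw [div_mul_div_comm, div_le_div_iff₀ (by positivity) (by positivity)]
            have hmY : ((nonRoot r).card : ℝ) * Y ≤ ((nonRoot r).card : ℝ) * (msize parent (parent v) : ℝ) :=
              mul_le_mul_of_nonneg_left hYle (le_trans zero_le_one hcard1)
            nlinarith [mul_le_mul_of_nonneg_right hmY (le_of_lt hmpos)]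
          linarith
  
end Tree

lemma numeric_bound {k : ℝ} (hk : 18 ≤ k) :
    psi 1 + (k / 6) * Real.log (k / 6) ≤ psi k := by
  have hk0 : (0:ℝ) < k := by linarith
  have hk6 : (0:ℝ) < k / 6 := by linarith
  have h1 : Real.log (k / 6) ≤ Real.log (4 * k) :=
    Real.log_le_log hk6 (by linarith)
  have h2 : (k / 6) * Real.log (k / 6) ≤ (k / 6) * Real.log (4 * k) :=
    mul_le_mul_of_nonneg_left h1 (le_of_lt hk6)
  have h3 : (2:ℝ) ≤ Real.log (4 * k) := by
    have hexp : Real.exp 2 ≤ 4 * k := by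
      have h1e := Real.exp_one_lt_d9
      have he2 : Real.exp 2 = Real.exp 1 * Real.exp 1 := by rw [← Real.exp_add]; norm_num
      nlinarith [Real.exp_pos 1]
    calc (2:ℝ) = Real.log (Real.exp 2) := (Real.log_exp 2).symm
      _ ≤ Real.log (4 * k) := Real.log_le_log (Real.exp_pos 2) hexp
  have h4 : Real.log 4 ≤ 3 := by
    have := Real.log_le_sub_one_of_pos (show (0:ℝ) < 4 by norm_num)
    linarith
  have h5 : (5 * k / 6) * 2 ≤ (5 * k / 6) * Real.log (4 * k) :=
    mul_le_mul_of_nonneg_left h3 (by linarith)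
  rw [psi_one]
  unfold psi
  have hsplit : k * Real.log (4 * k)
      = (k / 6) * Real.log (4 * k) + (5 * k / 6) * Real.log (4 * k) := by ring
  linarith

end ArbAux


theorem arborescence_counting_bound {V : Type} [Fintype V]
    (r : V) (parent : V → V) (c w : V → ℝ)
    (harb : IsArborescence r parent)
    (hne : (nonRoot r).Nonempty)
    (hc : ∀ v : V, v ≠ r → 0 < c v) (hw : ∀ v : V, v ≠ r → 0 < w v)
    (htri : CombinedTriangle r parent c w)
    (h2opt : CombinedTwoOpt r parent c w)
    (k : ℝ) (hkdef : k = (∑ v ∈ nonRoot r, c v) / ∑ v ∈ nonRoot r, w v)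
    (hk : 18 ≤ k) :
    (k / 6) ^ (k / 6) ≤ ((nonRoot r).card : ℝ) := by
  classical
  by_contra hcon
  push_neg at hcon
  set S := nonRoot r with hS
  set a := ArbAux.aval r parent with ha
  set ms := ArbAux.msize parent with hms
  have hSne : ∀ v ∈ S, v ≠ r := by
    intro v hv
    rw [hS] at hv
    unfold nonRoot at hv
    simpa using hv
  have hm1 : (1:ℝ) ≤ (S.card : ℝ) := by
    have := Finset.card_pos.2 hne
    exact_mod_cast this
  have hk0 : (0:ℝ) < k := by linarith
  have hk6 : (0:ℝ) < k / 6 := by linarith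
  -- Step 1 : every multiplier is < k
  have haval_lt : ∀ v ∈ S, a v < k := by
    intro v hv
    have hvr := hSne v hv
    by_contra hge
    push_neg at hge
    have hmono := ArbAux.psi_mono (show (1:ℝ) ≤ k by linarith) hge
    have hinv := ArbAux.aval_inv r parent harb (ArbAux.pdist r parent v) v hvr le_rfl
    have hms1 : (1:ℝ) ≤ (ms v : ℝ) := by exact_mod_cast ArbAux.msize_pos parent v
    have hlle : Real.log ((S.card:ℝ) / (ms v : ℝ)) ≤ Real.log (S.card:ℝ) := by
      apply Real.log_le_log (by positivity)
      exact div_le_self (by linarith) hms1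
    have hloglt : Real.log ((S.card:ℝ)) < Real.log ((k/6) ^ (k/6)) :=
      Real.log_lt_log (by linarith) hcon
    rw [Real.log_rpow hk6] at hloglt
    have hnum := ArbAux.numeric_bound hk
    rw [← ha, ← hms, ← hS] at hinv
    linarith
  -- Step 2 : per-vertex ledger inequality
  have hkey : ∀ v ∈ S, a v * c v ≤ a v * w v +
      ∑ z ∈ children parent v,
        (a v - 2 * a v * ((ms z : ℝ) / ((ms v : ℝ) - 1))) * c z := by
    intro v hv
    have hvr := hSne v hv
    have hA1 : (1:ℝ) ≤ a v := ArbAux.aval_ge_one r parent v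
    have hA0 : (0:ℝ) ≤ a v := by linarith
    by_cases hch : children parent v = ∅
    · have htr := htri v hvr
      rw [hch] at htr ⊢
      simp only [Finset.sum_empty, add_zero] at htr ⊢
      exact mul_le_mul_of_nonneg_left htr hA0
    · -- internal vertex
      have hne' : (children parent v).Nonempty := Finset.nonempty_iff_ne_empty.2 hch
      have hsum := ArbAux.sum_msize_children r parent harb hvr
      rw [← hms] at hsum
      obtain ⟨z₀, hz₀⟩ := hne'
      have hMpos : (0:ℝ) < (ms v : ℝ) - 1 := by
        rw [← hsum]
        apply Finset.sum_pos ?_ ⟨z₀, hz₀⟩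
        intro z hz
        have : (1:ℕ) ≤ ArbAux.msize parent z := ArbAux.msize_pos parent z
        exact_mod_cast lt_of_lt_of_le zero_lt_one (by exact_mod_cast this)
      -- weighted combination of the 2-opt inequalities
      have h2opt' : ∀ z ∈ children parent v,
          c v + 2 * c z ≤ w v + ∑ u ∈ children parent v, c u := by
        intro z hz
        have := h2opt v hvr z hz
        have herase : ∑ u ∈ (children parent v).erase z, c u
            = ∑ u ∈ children parent v, c u - c z := Finset.sum_erase_eq_sub hz
        linarith
      have hlamsum : ∑ z ∈ children parent v, (ms z : ℝ) / ((ms v : ℝ) - 1) = 1 := by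
        rw [← Finset.sum_div, hsum]
        exact div_self (ne_of_gt hMpos)
      have hwsum : ∑ z ∈ children parent v,
          ((ms z : ℝ) / ((ms v : ℝ) - 1)) * (c v + 2 * c z)
          ≤ ∑ z ∈ children parent v,
          ((ms z : ℝ) / ((ms v : ℝ) - 1)) * (w v + ∑ u ∈ children parent v, c u) := by
        apply Finset.sum_le_sum
        intro z hz
        apply mul_le_mul_of_nonneg_left (h2opt' z hz)
        positivity
      have hLHS : ∑ z ∈ children parent v,
          ((ms z : ℝ) / ((ms v : ℝ) - 1)) * (c v + 2 * c z)
          = c v + 2 * ∑ z ∈ children parent v,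
              ((ms z : ℝ) / ((ms v : ℝ) - 1)) * c z := by
        have : ∀ z ∈ children parent v,
            ((ms z : ℝ) / ((ms v : ℝ) - 1)) * (c v + 2 * c z)
            = ((ms z : ℝ) / ((ms v : ℝ) - 1)) * c v
              + 2 * (((ms z : ℝ) / ((ms v : ℝ) - 1)) * c z) := by
          intro z hz; ring
        rw [Finset.sum_congr rfl this, Finset.sum_add_distrib, ← Finset.sum_mul, hlamsum,
            ← Finset.mul_sum]
        ring
      have hRHS : ∑ z ∈ children parent v,
          ((ms z : ℝ) / ((ms v : ℝ) - 1)) * (w v + ∑ u ∈ children parent v, c u)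
          = w v + ∑ u ∈ children parent v, c u := by
        rw [← Finset.sum_mul, hlamsum, one_mul]
      have hcomb : c v + 2 * ∑ z ∈ children parent v,
          ((ms z : ℝ) / ((ms v : ℝ) - 1)) * c z
          ≤ w v + ∑ u ∈ children parent v, c u := by
        rw [← hLHS, ← hRHS]; exact hwsum
      have hmul := mul_le_mul_of_nonneg_left hcomb hA0
      have hexp : ∑ z ∈ children parent v,
          (a v - 2 * a v * ((ms z : ℝ) / ((ms v : ℝ) - 1))) * c z
          = (∑ z ∈ children parent v, a v * c z)
            - ∑ z ∈ children parent v, 2 * a v * (((ms z : ℝ) / ((ms v : ℝ) - 1)) * c z) := by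
        rw [← Finset.sum_sub_distrib]
        apply Finset.sum_congr rfl
        intro z hz; ring
      have he1 : (∑ z ∈ children parent v, a v * c z)
          = a v * ∑ u ∈ children parent v, c u := by
        rw [Finset.mul_sum]
      have he2 : ∑ z ∈ children parent v, 2 * a v * (((ms z : ℝ) / ((ms v : ℝ) - 1)) * c z)
          = 2 * a v * ∑ z ∈ children parent v, ((ms z : ℝ) / ((ms v : ℝ) - 1)) * c z := by
        rw [Finset.mul_sum]
      rw [hexp, he1, he2]
      nlinarith [hmul]
  -- Step 3 : sum the ledger over all non-root vertices and reindex
  have hB : ∀ z : V, z ∈ S.biUnion (children parent) ↔ parent z ≠ r := by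
    intro z
    rw [Finset.mem_biUnion]
    constructor
    · rintro ⟨v, hv, hz⟩
      rw [((ArbAux.mem_children parent _ _).1 hz).1]
      exact hSne v hv
    · intro hpz
      refine ⟨parent z, ?_, ?_⟩
      · rw [hS]; unfold nonRoot; simpa using hpz
      · rw [ArbAux.mem_children parent]
        refine ⟨rfl, fun h => hpz ?_⟩
        have hzr := ArbAux.fix_eq_root r parent harb h.symm
        rw [hzr, harb.1]
  have hBsub : S.biUnion (children parent) ⊆ S := by
    intro z hz
    rw [hB z] at hz
    rw [hS]; unfold nonRoot
    simp only [Finset.mem_filter, Finset.mem_univ, true_and]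
    intro h; exact hz (by rw [h, harb.1])
  have hdisj : (S : Set V).PairwiseDisjoint (children parent) := by
    intro v₁ hv₁ v₂ hv₂ hne'
    apply Finset.disjoint_left.2
    intro z hz₁ hz₂
    exact hne' (((ArbAux.mem_children parent _ _).1 hz₁).1.symm.trans
      ((ArbAux.mem_children parent _ _).1 hz₂).1)
  -- the reindexed two-opt mass
  have hreturn : ∀ v ∈ S, ∑ z ∈ children parent v,
      (a v - 2 * a v * ((ms z : ℝ) / ((ms v : ℝ) - 1))) * c z
      = ∑ z ∈ children parent v,
        (a (parent z) - 2 * a (parent z) * ((ms z : ℝ) / ((ms (parent z) : ℝ) - 1))) * c z := by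
    intro v hv
    apply Finset.sum_congr rfl
    intro z hz
    rw [((ArbAux.mem_children parent _ _).1 hz).1]
  have htot : ∑ v ∈ S, a v * c v ≤ ∑ v ∈ S, a v * w v +
      ∑ z ∈ S.biUnion (children parent),
        (a (parent z) - 2 * a (parent z) * ((ms z : ℝ) / ((ms (parent z) : ℝ) - 1))) * c z := by
    rw [Finset.sum_biUnion hdisj]
    calc ∑ v ∈ S, a v * c v
        ≤ ∑ v ∈ S, (a v * w v + ∑ z ∈ children parent v,
            (a v - 2 * a v * ((ms z : ℝ) / ((ms v : ℝ) - 1))) * c z) := by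
          apply Finset.sum_le_sum hkey
      _ = ∑ v ∈ S, a v * w v + ∑ v ∈ S, ∑ z ∈ children parent v,
            (a v - 2 * a v * ((ms z : ℝ) / ((ms v : ℝ) - 1))) * c z := by
          rw [Finset.sum_add_distrib]
      _ = ∑ v ∈ S, a v * w v + ∑ v ∈ S, ∑ z ∈ children parent v,
            (a (parent z) - 2 * a (parent z) * ((ms z : ℝ) / ((ms (parent z) : ℝ) - 1))) * c z := by
          rw [Finset.sum_congr rfl hreturn]
  -- Step 4 : coefficient of each c z is at least 1
  have hcoeff : ∑ z ∈ S, c z ≤ ∑ z ∈ S, a z * c z -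
      ∑ z ∈ S.biUnion (children parent),
        (a (parent z) - 2 * a (parent z) * ((ms z : ℝ) / ((ms (parent z) : ℝ) - 1))) * c z := by
    have hsdiff := Finset.sum_sdiff (f := fun z => a z * c z) hBsub
    have hsdiff2 := Finset.sum_sdiff (f := fun z => c z) hBsub
    have hout : ∀ z ∈ S \ S.biUnion (children parent), a z * c z = c z := by
      intro z hz
      obtain ⟨hzS, hznB⟩ := Finset.mem_sdiff.1 hz
      have hpz : parent z = r := by
        by_contra hne'
        exact hznB ((hB z).2 hne')
      rw [ha, ArbAux.aval_root_child r parent harb (hSne z hzS) hpz, one_mul]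
    have hin : ∀ z ∈ S.biUnion (children parent),
        c z + (a (parent z) - 2 * a (parent z) * ((ms z : ℝ) / ((ms (parent z) : ℝ) - 1))) * c z
        ≤ a z * c z := by
      intro z hz
      have hpz := (hB z).1 hz
      have hzS := hBsub hz
      have hzr := hSne z hzS
      have hstep := ArbAux.aval_step r parent harb hzr hpz
      have hmax : 1 + a (parent z) * (1 - 2 * (ms z : ℝ) / ((ms (parent z) : ℝ) - 1)) ≤ a z := by
        rw [ha, hstep]; exact le_max_right _ _
      have hcz : (0:ℝ) ≤ c z := le_of_lt (hc z hzr)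
      have hcoef : 1 + (a (parent z) - 2 * a (parent z) * ((ms z : ℝ) / ((ms (parent z) : ℝ) - 1)))
          ≤ a z := by
        have : a (parent z) * (1 - 2 * (ms z : ℝ) / ((ms (parent z) : ℝ) - 1))
            = a (parent z) - 2 * a (parent z) * ((ms z : ℝ) / ((ms (parent z) : ℝ) - 1)) := by
          ring
        linarith [hmax, this.symm.le, this.le]
      nlinarith [mul_le_mul_of_nonneg_right hcoef hcz]
    -- assemble
    have h1 : ∑ z ∈ S.biUnion (children parent), (c z +
        (a (parent z) - 2 * a (parent z) * ((ms z : ℝ) / ((ms (parent z) : ℝ) - 1))) * c z)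
        ≤ ∑ z ∈ S.biUnion (children parent), a z * c z := Finset.sum_le_sum hin
    rw [Finset.sum_add_distrib] at h1
    have h2 : ∑ z ∈ S \ S.biUnion (children parent), a z * c z
        = ∑ z ∈ S \ S.biUnion (children parent), c z := Finset.sum_congr rfl hout
    linarith [hsdiff, hsdiff2]
  -- Step 5 : conclude
  have hwpos : (0:ℝ) < ∑ v ∈ S, w v := by
    apply Finset.sum_pos ?_ hne
    intro v hv; exact hw v (hSne v hv)
  have hck : ∑ v ∈ S, c v = k * ∑ v ∈ S, w v := by
    rw [hkdef, hS]
    field_simp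
    exact (mul_div_cancel_right₀ _ (ne_of_gt hwpos)).symm
  have hstrict : ∑ v ∈ S, a v * w v < ∑ v ∈ S, k * w v := by
    apply Finset.sum_lt_sum_of_nonempty hne
    intro v hv
    exact mul_lt_mul_of_pos_right (haval_lt v hv) (hw v (hSne v hv))
  rw [← Finset.mul_sum] at hstrict
  linarith [htot, hcoeff, hstrict, hck]
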